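/- arXiv:1112.5305 — 6 statements merged into one kernel-verified Lean document; each statement's English description precedes it below -/
import Mathlib

section
/- Let b : (0,∞) → ℝ be a bounded function. For n, i ∈ ℕ define the landmark point t_n^i = inf{ t ∈ [i/2^n, (i+1)/2^n] : b*(t) ≥ sup_{[i/2^n,(i+1)/2^n]} b }, where b* is the upper-semi-continuous envelope of b. Then b*(t_n^i) ≥ b*(s) for every s ∈ [i/2^n, (i+1)/2^n). -/
open Filter Set Topology

/-- The upper-semi-continuous envelope of `b` on `(0,∞)`:
`b*(t) = max (b t) (limsup_{s→t, s∈(0,∞)} b s)`. -/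
noncomputable def bstarEnv (b : ℝ → ℝ) (t : ℝ) : ℝ :=
  max (b t) (Filter.limsup b (nhdsWithin t ({t}ᶜ ∩ Set.Ioi 0)))

/-- The landmark point `t_n^i = inf { t ∈ [i/2^n,(i+1)/2^n] : b*(t) ≥ sup_{[i/2^n,(i+1)/2^n]} b }`. -/
noncomputable def landmark (b : ℝ → ℝ) (n i : ℕ) : ℝ :=
  sInf {t ∈ Set.Icc ((i : ℝ) / 2 ^ n) (((i : ℝ) + 1) / 2 ^ n) |
    sSup (b '' Set.Icc ((i : ℝ) / 2 ^ n) (((i : ℝ) + 1) / 2 ^ n)) ≤ bstarEnv b t}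

section aux

variable {b : ℝ → ℝ} {M : ℝ}

private lemma Dsub {t : ℝ} (ht : 0 ≤ t) : Set.Ioi t ⊆ ({t}ᶜ ∩ Set.Ioi 0) := fun x hx =>
  ⟨Set.mem_compl_singleton_iff.mpr (ne_of_gt hx), lt_of_le_of_lt ht hx⟩

private lemma neBotD {t : ℝ} (ht : 0 ≤ t) : (nhdsWithin t ({t}ᶜ ∩ Set.Ioi 0)).NeBot :=
  Filter.NeBot.mono (nhdsGT_neBot t) (nhdsWithin_mono t (Dsub ht))

private lemma bddAboveF (hb : ∀ t : ℝ, |b t| ≤ M) (F : Filter ℝ) :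
    F.IsBoundedUnder (· ≤ ·) b :=
  Filter.isBoundedUnder_of ⟨M, fun x => (abs_le.1 (hb x)).2⟩

private lemma cobddF (hb : ∀ t : ℝ, |b t| ≤ M) (F : Filter ℝ) [F.NeBot] :
    F.IsCoboundedUnder (· ≤ ·) b :=
  Filter.IsBoundedUnder.isCoboundedUnder_le
    (Filter.isBoundedUnder_of ⟨-M, fun x => (abs_le.1 (hb x)).1⟩)

private lemma bddAboveImg (hb : ∀ t : ℝ, |b t| ≤ M) (s : Set ℝ) : BddAbove (b '' s) := by
  refine ⟨M, ?_⟩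
  rintro _ ⟨x, -, rfl⟩
  exact (abs_le.1 (hb x)).2

/-- Interior bound: for `s ∈ (a,c)`, `b*(s) ≤ sup_{[a,c]} b`. -/
private lemma bstar_le_sSup (hb : ∀ t : ℝ, |b t| ≤ M) {a c s : ℝ} (ha : 0 ≤ a)
    (hs : s ∈ Set.Ioo a c) : bstarEnv b s ≤ sSup (b '' Set.Icc a c) := by
  have hbdd := bddAboveImg hb (Set.Icc a c)
  have hmem : b s ≤ sSup (b '' Set.Icc a c) := le_csSup hbdd ⟨s, ⟨hs.1.le, hs.2.le⟩, rfl⟩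
  have hs0 : 0 ≤ s := (lt_of_le_of_lt ha hs.1).le
  have : (nhdsWithin s ({s}ᶜ ∩ Set.Ioi 0)).NeBot := neBotD hs0
  have hlim : Filter.limsup b (nhdsWithin s ({s}ᶜ ∩ Set.Ioi 0)) ≤ sSup (b '' Set.Icc a c) := by
    apply Filter.limsup_le_of_le (cobddF hb _)
    have hoo : Set.Ioo a c ∈ 𝓝 s := Ioo_mem_nhds hs.1 hs.2
    filter_upwards [nhdsWithin_le_nhds hoo] with x hx
    exact le_csSup hbdd ⟨x, ⟨hx.1.le, hx.2.le⟩, rfl⟩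
  exact max_le hmem hlim

/-- Attainment: `b*` attains the sup of `b` somewhere on `[a,c]`. -/
private lemma exists_bstar_ge (hb : ∀ t : ℝ, |b t| ≤ M) {a c : ℝ} (ha : 0 ≤ a) (hac : a < c) :
    ∃ t ∈ Set.Icc a c, sSup (b '' Set.Icc a c) ≤ bstarEnv b t := by
  set S := sSup (b '' Set.Icc a c) with hS
  have hne : (b '' Set.Icc a c).Nonempty := ⟨b a, a, ⟨le_refl a, hac.le⟩, rfl⟩
  have hbdd := bddAboveImg hb (Set.Icc a c)
  obtain ⟨u, -, hus, humem⟩ := exists_seq_tendsto_sSup hne hbdd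
  choose x hxI hxb using humem
  obtain ⟨t, htI, φ, hφ, hxt⟩ := (isCompact_Icc).tendsto_subseq hxI
  refine ⟨t, htI, ?_⟩
  have hbu : Tendsto (fun k => b (x (φ k))) atTop (𝓝 S) := by
    have heq : (fun k => b (x (φ k))) = u ∘ φ := funext fun k => hxb (φ k)
    rw [heq]
    exact hus.comp hφ.tendsto_atTop
  by_cases hev : ∀ᶠ k in atTop, x (φ k) ≠ t
  · have ht0 : 0 ≤ t := le_trans ha htI.1
    have hmemD : ∀ᶠ k in atTop, x (φ k) ∈ ({t}ᶜ ∩ Set.Ioi 0) := by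
      rcases eq_or_lt_of_le ht0 with h0 | h0
      · filter_upwards [hev] with k hk
        refine ⟨hk, lt_of_le_of_ne (le_trans ha (hxI (φ k)).1) ?_⟩
        intro h
        exact hk (h.symm.trans h0)
      · have hIoi : Set.Ioi (0:ℝ) ∈ 𝓝 t := Ioi_mem_nhds h0
        filter_upwards [hev, mem_map.mp (hxt hIoi)] with k hk hk'
        exact ⟨hk, hk'⟩
    have htend : Tendsto (x ∘ φ) atTop (nhdsWithin t ({t}ᶜ ∩ Set.Ioi 0)) :=
      tendsto_nhdsWithin_of_tendsto_nhds_of_eventually_within _ hxt hmemD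
    have : (nhdsWithin t ({t}ᶜ ∩ Set.Ioi 0)).NeBot := neBotD ht0
    have hlim : S ≤ Filter.limsup b (nhdsWithin t ({t}ᶜ ∩ Set.Ioi 0)) := by
      refine le_of_forall_pos_le_add fun ε hε => ?_
      have hevge : ∀ᶠ k in atTop, S - ε ≤ b (x (φ k)) :=
        hbu.eventually (eventually_ge_nhds (by linarith))
      have hfreq : ∃ᶠ y in nhdsWithin t ({t}ᶜ ∩ Set.Ioi 0), S - ε ≤ b y :=
        htend.frequently hevge.frequently
      have := Filter.le_limsup_of_frequently_le hfreq (bddAboveF hb _)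
      linarith
    exact le_trans hlim (le_max_right _ _)
  · have hfr : ∃ᶠ k in atTop, x (φ k) = t :=
      (Filter.not_eventually.mp hev).mono fun k hk => not_not.mp hk
    obtain ⟨ψ, hψ, hψeq⟩ := Filter.extraction_of_frequently_atTop hfr
    have htendc : Tendsto (fun k => b (x (φ (ψ k)))) atTop (𝓝 S) := hbu.comp hψ.tendsto_atTop
    have hconst : (fun k => b (x (φ (ψ k)))) = fun _ => b t := funext fun k => by rw [hψeq k]
    rw [hconst] at htendc
    have hbt : b t = S := tendsto_nhds_unique tendsto_const_nhds htendc
    exact le_trans (le_of_eq hbt.symm) (le_max_left _ _)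

/-- The inf of the landmark set still carries `b* ≥ S`. -/
private lemma sInf_bstar_ge (hb : ∀ t : ℝ, |b t| ≤ M) {a c : ℝ} (ha : 0 ≤ a) (hac : a < c) :
    sSup (b '' Set.Icc a c) ≤
      bstarEnv b (sInf {t ∈ Set.Icc a c | sSup (b '' Set.Icc a c) ≤ bstarEnv b t}) := by
  set S := sSup (b '' Set.Icc a c) with hS
  set A := {t ∈ Set.Icc a c | S ≤ bstarEnv b t} with hA
  have hAne : A.Nonempty := by
    obtain ⟨t, htI, hts⟩ := exists_bstar_ge hb ha hac
    exact ⟨t, htI, hts⟩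
  have hAbdd : BddBelow A := ⟨a, fun t ht => ht.1.1⟩
  set T := sInf A with hT
  have hTa : a ≤ T := le_csInf hAne fun t ht => ht.1.1
  by_cases hTA : T ∈ A
  · exact hTA.2
  · have hT0 : 0 ≤ T := le_trans ha hTa
    have : (nhdsWithin T ({T}ᶜ ∩ Set.Ioi 0)).NeBot := neBotD hT0
    have hlim : S ≤ Filter.limsup b (nhdsWithin T ({T}ᶜ ∩ Set.Ioi 0)) := by
      refine le_of_forall_pos_le_add fun ε hε => ?_
      have hfreq : ∃ᶠ y in nhdsWithin T ({T}ᶜ ∩ Set.Ioi 0), S - ε ≤ b y := by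
        rw [Filter.frequently_iff]
        intro U hU
        rw [mem_nhdsWithin] at hU
        obtain ⟨V, hVopen, hTV, hVU⟩ := hU
        obtain ⟨δ, hδ, hball⟩ := Metric.isOpen_iff.mp hVopen T hTV
        have hlt : sInf A < T + δ/2 := by
          rw [← hT]; linarith
        obtain ⟨t', ht'A, ht'lt⟩ := (csInf_lt_iff hAbdd hAne).mp hlt
        have ht'ge : T ≤ t' := csInf_le hAbdd ht'A
        have ht'ne : t' ≠ T := fun h => hTA (h ▸ ht'A)
        have ht'gt : T < t' := lt_of_le_of_ne ht'ge (Ne.symm ht'ne)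
        have ht'pos : 0 < t' := lt_of_le_of_lt hT0 ht'gt
        have ht'ball : t' ∈ Metric.ball T δ := by
          rw [Metric.mem_ball, Real.dist_eq, abs_of_nonneg (by linarith)]
          linarith
        rcases le_max_iff.mp ht'A.2 with hbt' | hlimt'
        · exact ⟨t', hVU ⟨hball ht'ball, ht'ne, ht'pos⟩, by linarith⟩
        · have : (nhdsWithin t' ({t'}ᶜ ∩ Set.Ioi 0)).NeBot := neBotD ht'pos.le
          have hfr : ∃ᶠ y in nhdsWithin t' ({t'}ᶜ ∩ Set.Ioi 0), S - ε < b y :=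
            Filter.frequently_lt_of_lt_limsup (cobddF hb _)
              (lt_of_lt_of_le (by linarith) hlimt')
          have hW : (Metric.ball T δ ∩ {T}ᶜ) ∈ 𝓝 t' :=
            IsOpen.mem_nhds ((Metric.isOpen_ball).inter isOpen_compl_singleton)
              ⟨ht'ball, ht'ne⟩
          have hev' : ∀ᶠ y in nhdsWithin t' ({t'}ᶜ ∩ Set.Ioi 0),
              y ∈ Metric.ball T δ ∩ {T}ᶜ := mem_nhdsWithin_of_mem_nhds hW
          have hevD : ∀ᶠ y in nhdsWithin t' ({t'}ᶜ ∩ Set.Ioi 0),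
              y ∈ ({t'}ᶜ ∩ Set.Ioi 0) := eventually_mem_nhdsWithin
          obtain ⟨y, hy1, hy2, hy3⟩ := (hfr.and_eventually (hev'.and hevD)).exists
          exact ⟨y, hVU ⟨hball hy2.1, hy2.2, hy3.2⟩, hy1.le⟩
      have := Filter.le_limsup_of_frequently_le hfreq (bddAboveF hb _)
      linarith
    exact le_trans hlim (le_max_right _ _)

end aux

/-- for bounded `b`, `b*(t_n^i) ≥ b*(s)` for every
`s ∈ [i/2^n, (i+1)/2^n)`. -/
theorem stmt2 (b : ℝ → ℝ) (M : ℝ) (hb : ∀ t : ℝ, |b t| ≤ M) (n i : ℕ) :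
    ∀ s ∈ Set.Ico ((i : ℝ) / 2 ^ n) (((i : ℝ) + 1) / 2 ^ n),
      bstarEnv b s ≤ bstarEnv b (landmark b n i) := by
  intro s hs
  set a : ℝ := (i : ℝ) / 2 ^ n with hadef
  set c : ℝ := ((i : ℝ) + 1) / 2 ^ n with hcdef
  have h2 : (0:ℝ) < 2 ^ n := by positivity
  have ha : 0 ≤ a := by positivity
  have hac : a < c := by
    rw [hadef, hcdef, div_lt_div_iff_of_pos_right h2]
    linarith
  set S := sSup (b '' Set.Icc a c) with hS
  set A := {t ∈ Set.Icc a c | S ≤ bstarEnv b t} with hA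
  have hL : landmark b n i = sInf A := rfl
  have key : S ≤ bstarEnv b (sInf A) := sInf_bstar_ge hb ha hac
  have hAne : A.Nonempty := by
    obtain ⟨t, htI, hts⟩ := exists_bstar_ge hb ha hac
    exact ⟨t, htI, hts⟩
  have hAbdd : BddBelow A := ⟨a, fun t ht => ht.1.1⟩
  rw [hL]
  rcases eq_or_lt_of_le hs.1 with heq | hlt
  · by_cases hsa : S ≤ bstarEnv b s
    · have hsA : s ∈ A := ⟨⟨heq.le, hs.2.le⟩, hsa⟩
      have : sInf A = s := le_antisymm (csInf_le hAbdd hsA)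
        (le_csInf hAne fun t ht => heq ▸ ht.1.1)
      rw [this]
    · push_neg at hsa
      exact le_trans hsa.le key
  · exact le_trans (bstar_le_sSup hb ha ⟨hlt, hs.2⟩) key
end

section
/- Let b : (0,∞) → ℝ be bounded with upper-semi-continuous envelope b*, and let t_n^i be the landmark points defined by t_n^i = inf{ t ∈ [i/2^n,(i+1)/2^n] : b*(t) ≥ sup_{[i/2^n,(i+1)/2^n]} b }. Then for every n and i, either t_n^i = t_{n+1}^{2i} or t_n^i = t_{n+1}^{2i+1}; consequently the set LM_n(b) = {t_n^i : i ∈ ℕ} satisfies LM_n(b) ⊆ LM_{n+1}(b). -/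
open Filter Set Topology

lemma bddAbove_image_aux (b : ℝ → ℝ) (M : ℝ) (hb : ∀ t : ℝ, |b t| ≤ M) (s : Set ℝ) :
    BddAbove (b '' s) := ⟨M, by rintro _ ⟨x, _, rfl⟩; exact (abs_le.1 (hb x)).2⟩

lemma landmark_congr (b : ℝ → ℝ) (n i : ℕ) {p q : ℝ} (hp : ((i : ℕ) : ℝ) / 2 ^ n = p)
    (hq : ((i : ℝ) + 1) / 2 ^ n = q) :
    landmark b n i = sInf {t ∈ Set.Icc p q | sSup (b '' Set.Icc p q) ≤ bstarEnv b t} := by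
  subst hp hq; rfl

/-- Attainment: there exists a point of `[p,q]` where `b*` dominates the sup of `b`. -/
lemma exists_envelope_ge (b : ℝ → ℝ) (M : ℝ) (hb : ∀ t : ℝ, |b t| ≤ M)
    {p q : ℝ} (hp : 0 ≤ p) (hpq : p ≤ q) :
    ∃ t ∈ Set.Icc p q, sSup (b '' Set.Icc p q) ≤ bstarEnv b t := by
  set S := sSup (b '' Set.Icc p q) with hSdef
  by_cases hcase : ∃ t ∈ Set.Icc p q, S ≤ b t
  · obtain ⟨t, ht, hbt⟩ := hcase
    exact ⟨t, ht, hbt.trans (le_max_left _ _)⟩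
  push_neg at hcase
  have hne : (Set.Icc p q).Nonempty := ⟨p, le_refl p, hpq⟩
  have himg : (b '' Set.Icc p q).Nonempty := hne.image b
  have hbdd : BddAbove (b '' Set.Icc p q) := bddAbove_image_aux b M hb _
  have hseq : ∀ k : ℕ, ∃ t, t ∈ Set.Icc p q ∧ S - 1 / (k + 1) < b t := by
    intro k
    have hlt : S - 1 / (k + 1 : ℝ) < S := by
      have : (0 : ℝ) < 1 / (k + 1 : ℝ) := by positivity
      linarith
    obtain ⟨y, ⟨x, hx, rfl⟩, hy2⟩ := exists_lt_of_lt_csSup himg hlt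
    exact ⟨x, hx, hy2⟩
  choose u hu hu2 using hseq
  obtain ⟨t, ht, φ, hφ, htend⟩ := isCompact_Icc.tendsto_subseq hu
  -- b (u (φ k)) → S
  have hball : ∀ x ∈ Set.Icc p q, b x ≤ S := fun x hx => le_csSup hbdd ⟨x, hx, rfl⟩
  have htendS : Tendsto (fun k => b (u (φ k))) atTop (𝓝 S) := by
    have h0 : Tendsto (fun k : ℕ => S - 1 / (φ k + 1 : ℝ)) atTop (𝓝 S) := by
      have h1 : Tendsto (fun k : ℕ => 1 / ((φ k : ℝ) + 1)) atTop (𝓝 0) :=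
        tendsto_one_div_add_atTop_nhds_zero_nat.comp hφ.tendsto_atTop
      have := tendsto_const_nhds (x := S) (f := atTop (α := ℕ)) |>.sub h1
      simpa using this
    refine tendsto_of_tendsto_of_tendsto_of_le_of_le h0 tendsto_const_nhds
      (fun k => (hu2 (φ k)).le) (fun k => hball _ (hu (φ k)))
  -- any value taken frequently by the subsequence satisfies b c = S, contradiction
  have hfreq : ∀ c : ℝ, (∃ᶠ k in atTop, u (φ k) = c) → False := by
    intro c hc
    have hcmem : c ∈ Set.Icc p q := by
      obtain ⟨k, hk⟩ := hc.exists
      exact hk ▸ hu (φ k)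
    have hbc : b c = S := by
      by_contra hne'
      have hev : ∀ᶠ k in atTop, b (u (φ k)) ≠ b c :=
        htendS.eventually (isOpen_compl_singleton.eventually_mem (by simpa using Ne.symm hne'))
      obtain ⟨k, hk1, hk2⟩ := (hc.and_eventually hev).exists
      exact hk2 (by rw [hk1])
    exact absurd (hcase c hcmem) (by rw [hbc]; exact lt_irrefl S)
  have hnet : ∀ᶠ k in atTop, u (φ k) ≠ t := by
    by_contra h
    rw [Filter.not_eventually] at h
    exact hfreq t (h.mono fun k hk => not_not.mp hk)
  have hne0 : ∀ᶠ k in atTop, u (φ k) ≠ 0 := by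
    by_contra h
    rw [Filter.not_eventually] at h
    exact hfreq 0 (h.mono fun k hk => not_not.mp hk)
  have hmem : ∀ᶠ k in atTop, u (φ k) ∈ {t}ᶜ ∩ Set.Ioi 0 := by
    filter_upwards [hnet, hne0] with k h1 h2
    exact ⟨h1, lt_of_le_of_ne (hp.trans (hu (φ k)).1) (Ne.symm h2)⟩
  have htw : Tendsto (fun k => u (φ k)) atTop (𝓝[{t}ᶜ ∩ Set.Ioi 0] t) :=
    tendsto_nhdsWithin_of_tendsto_nhds_of_eventually_within _ htend hmem
  have hSeq : S = limsup (fun k => b (u (φ k))) atTop := htendS.limsup_eq.symm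
  have hmap : limsup b (Filter.map (fun k => u (φ k)) atTop)
      = limsup (fun k => b (u (φ k))) atTop := by
    simp only [Filter.limsup]
    rw [Filter.map_map]
    rfl
  have hle : limsup b (Filter.map (fun k => u (φ k)) atTop)
      ≤ limsup b (𝓝[{t}ᶜ ∩ Set.Ioi 0] t) := by
    refine Filter.limsup_le_limsup_of_le htw ?_ ?_
    · have hbdd' : IsBoundedUnder (· ≥ ·) (Filter.map (fun k => u (φ k)) atTop) b :=
        Filter.isBoundedUnder_of ⟨-M, fun x => (abs_le.1 (hb x)).1⟩
      exact hbdd'.isCoboundedUnder_le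
    · exact Filter.isBoundedUnder_of ⟨M, fun x => (abs_le.1 (hb x)).2⟩
  refine ⟨t, ht, ?_⟩
  have : S ≤ limsup b (𝓝[{t}ᶜ ∩ Set.Ioi 0] t) := by
    rw [hSeq, ← hmap]; exact hle
  exact this.trans (le_max_right _ _)

/-- Upper bound for the envelope at interior points. -/
lemma bstar_le_of_mem_Ioo (b : ℝ → ℝ) (M : ℝ) (hb : ∀ t : ℝ, |b t| ≤ M)
    {p q t : ℝ} (hp : 0 ≤ p) (ht : t ∈ Set.Ioo p q) :
    bstarEnv b t ≤ sSup (b '' Set.Icc p q) := by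
  have hbdd : BddAbove (b '' Set.Icc p q) := bddAbove_image_aux b M hb _
  have h1 : b t ≤ sSup (b '' Set.Icc p q) :=
    le_csSup hbdd ⟨t, ⟨ht.1.le, ht.2.le⟩, rfl⟩
  have htpos : 0 < t := lt_of_le_of_lt hp ht.1
  have hfeq : 𝓝[{t}ᶜ ∩ Set.Ioi 0] t = 𝓝[{t}ᶜ] t := by
    rw [Set.inter_comm]
    exact nhdsWithin_inter_of_mem (mem_nhdsWithin_of_mem_nhds (Ioi_mem_nhds htpos))
  have hNB : (𝓝[{t}ᶜ ∩ Set.Ioi 0] t).NeBot := by rw [hfeq]; infer_instance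
  have h2 : limsup b (𝓝[{t}ᶜ ∩ Set.Ioi 0] t) ≤ sSup (b '' Set.Icc p q) := by
    refine Filter.limsup_le_of_le ?_ ?_
    · have hbdd' : IsBoundedUnder (· ≥ ·) (𝓝[{t}ᶜ ∩ Set.Ioi 0] t) b :=
        Filter.isBoundedUnder_of ⟨-M, fun x => (abs_le.1 (hb x)).1⟩
      exact hbdd'.isCoboundedUnder_le
    · have hoo : Set.Ioo p q ∈ 𝓝 t := isOpen_Ioo.mem_nhds ht
      filter_upwards [mem_nhdsWithin_of_mem_nhds hoo] with x hx
      exact le_csSup hbdd ⟨x, ⟨hx.1.le, hx.2.le⟩, rfl⟩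
  exact max_le h1 h2

/-- either `t_n^i = t_{n+1}^{2i}` or `t_n^i = t_{n+1}^{2i+1}`;
consequently `LM_n(b) ⊆ LM_{n+1}(b)`. -/
theorem stmt3 (b : ℝ → ℝ) (M : ℝ) (hb : ∀ t : ℝ, |b t| ≤ M) (n : ℕ) :
    (∀ i : ℕ, landmark b n i = landmark b (n + 1) (2 * i)
        ∨ landmark b n i = landmark b (n + 1) (2 * i + 1))
    ∧ {t : ℝ | ∃ i : ℕ, t = landmark b n i}
        ⊆ {t : ℝ | ∃ j : ℕ, t = landmark b (n + 1) j} := by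
  have key : ∀ i : ℕ, landmark b n i = landmark b (n + 1) (2 * i)
      ∨ landmark b n i = landmark b (n + 1) (2 * i + 1) := by
    intro i
    set a : ℝ := (i : ℝ) / 2 ^ n with ha
    set c : ℝ := ((i : ℝ) + 1) / 2 ^ n with hc
    set m : ℝ := (2 * (i : ℝ) + 1) / 2 ^ (n + 1) with hm
    have hpow : (0 : ℝ) < 2 ^ (n + 1) := by positivity
    have hpow' : (0 : ℝ) < 2 ^ n := by positivity
    have ha0 : 0 ≤ a := by positivity
    have ham : a ≤ m := by
      rw [ha, hm, div_le_div_iff₀ hpow' hpow, pow_succ]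
      nlinarith [hpow', Nat.cast_nonneg (α := ℝ) i]
    have hmc : m ≤ c := by
      rw [hc, hm, div_le_div_iff₀ hpow hpow', pow_succ]
      nlinarith [hpow', Nat.cast_nonneg (α := ℝ) i]
    have hac : a ≤ c := ham.trans hmc
    have hm0 : 0 ≤ m := ha0.trans ham
    have e1 : landmark b n i
        = sInf {t ∈ Set.Icc a c | sSup (b '' Set.Icc a c) ≤ bstarEnv b t} :=
      landmark_congr b n i rfl rfl
    have e2 : landmark b (n + 1) (2 * i)
        = sInf {t ∈ Set.Icc a m | sSup (b '' Set.Icc a m) ≤ bstarEnv b t} := by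
      refine landmark_congr b (n + 1) (2 * i) ?_ ?_
      · rw [ha]; push_cast; rw [pow_succ]; ring
      · rw [hm]; push_cast; ring
    have e3 : landmark b (n + 1) (2 * i + 1)
        = sInf {t ∈ Set.Icc m c | sSup (b '' Set.Icc m c) ≤ bstarEnv b t} := by
      refine landmark_congr b (n + 1) (2 * i + 1) ?_ ?_
      · rw [hm]; push_cast; ring
      · rw [hc]; push_cast; rw [pow_succ]; field_simp; ring
    set S := sSup (b '' Set.Icc a c) with hS
    set SL := sSup (b '' Set.Icc a m) with hSL
    set SR := sSup (b '' Set.Icc m c) with hSR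
    have hunion : Set.Icc a m ∪ Set.Icc m c = Set.Icc a c := Set.Icc_union_Icc_eq_Icc ham hmc
    have hmax : S = max SL SR := by
      rw [hS, hSL, hSR, ← hunion, Set.image_union]
      exact csSup_union (bddAbove_image_aux b M hb _) (Set.Nonempty.image b ⟨a, le_refl a, ham⟩)
        (bddAbove_image_aux b M hb _) (Set.Nonempty.image b ⟨m, le_refl m, hmc⟩)
    set T := {t ∈ Set.Icc a c | S ≤ bstarEnv b t} with hT
    set TL := {t ∈ Set.Icc a m | SL ≤ bstarEnv b t} with hTL
    set TR := {t ∈ Set.Icc m c | SR ≤ bstarEnv b t} with hTR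
    have hTne : T.Nonempty := by
      obtain ⟨t, h1, h2⟩ := exists_envelope_ge b M hb ha0 hac
      exact ⟨t, h1, h2⟩
    have hTLne : TL.Nonempty := by
      obtain ⟨t, h1, h2⟩ := exists_envelope_ge b M hb ha0 ham
      exact ⟨t, h1, h2⟩
    have hTRne : TR.Nonempty := by
      obtain ⟨t, h1, h2⟩ := exists_envelope_ge b M hb hm0 hmc
      exact ⟨t, h1, h2⟩
    have hTbd : BddBelow T := ⟨a, fun t ht => ht.1.1⟩
    have hTLbd : BddBelow TL := ⟨a, fun t ht => ht.1.1⟩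
    have hTRbd : BddBelow TR := ⟨m, fun t ht => ht.1.1⟩
    rcases le_or_gt SR SL with hcase | hcase
    · -- S = SL, claim landmark n i = landmark (n+1) (2i)
      left
      have hSeq : S = SL := by rw [hmax, max_eq_left hcase]
      rw [e1, e2]
      apply le_antisymm
      · refine csInf_le_csInf hTbd hTLne fun t ht => ?_
        exact ⟨Set.Icc_subset_Icc_right hmc ht.1, hSeq ▸ ht.2⟩
      · refine le_csInf hTne fun t ht => ?_
        rcases le_or_gt t m with htm | htm
        · exact csInf_le hTLbd ⟨⟨ht.1.1, htm⟩, hSeq ▸ ht.2⟩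
        · obtain ⟨s, hs⟩ := hTLne
          exact (csInf_le hTLbd hs).trans (hs.1.2.trans htm.le)
    · -- S = SR
      have hSeq : S = SR := by rw [hmax, max_eq_right hcase.le]
      by_cases hea : S ≤ bstarEnv b a
      · -- both landmarks equal a
        left
        have h1 : sInf T = a :=
          le_antisymm (csInf_le hTbd ⟨⟨le_refl a, hac⟩, hea⟩) (le_csInf hTne fun t ht => ht.1.1)
        have h2 : sInf TL = a :=
          le_antisymm (csInf_le hTLbd ⟨⟨le_refl a, ham⟩, (hcase.le.trans (hSeq ▸ hea) : SL ≤ _)⟩)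
            (le_csInf hTLne fun t ht => ht.1.1)
        rw [e1, e2, h1, h2]
      · right
        rw [e1, e3]
        apply le_antisymm
        · refine csInf_le_csInf hTbd hTRne fun t ht => ?_
          exact ⟨Set.Icc_subset_Icc_left ham ht.1, hSeq ▸ ht.2⟩
        · refine le_csInf hTne fun t ht => ?_
          rcases le_or_gt m t with htm | htm
          · exact csInf_le hTRbd ⟨⟨htm, ht.1.2⟩, hSeq ▸ ht.2⟩
          · exfalso
            have hta : a < t := by
              rcases eq_or_lt_of_le ht.1.1 with h | h
              · exact absurd (h ▸ ht.2) hea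
              · exact h
            have := bstar_le_of_mem_Ioo b M hb ha0 ⟨hta, htm⟩
            have : S ≤ SL := ht.2.trans this
            rw [hSeq] at this
            exact absurd hcase (not_lt.mpr this)
  refine ⟨key, ?_⟩
  rintro t ⟨i, rfl⟩
  rcases key i with h | h
  · exact ⟨2 * i, h⟩
  · exact ⟨2 * i + 1, h⟩
end

section
/- Let X be a stochastic process with continuous sample paths, b : (0,∞) → ℝ bounded, b* its upper-semi-continuous envelope, and LM(b) = ∪_n LM_n(b) its set of landmark points. Then for every t > 0, the event {X_s ≥ b(s) for all s ∈ (0,t)} equals the event {X_s ≥ b*(s) for all s ∈ (0,t) ∩ LM(b)}. -/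
open Filter Set Topology

private lemma bstar_bddUnder {b : ℝ → ℝ} {M : ℝ} (hb : ∀ t : ℝ, |b t| ≤ M) (F : Filter ℝ) :
    F.IsBoundedUnder (· ≤ ·) b :=
  isBoundedUnder_of ⟨M, fun x => (abs_le.mp (hb x)).2⟩

private lemma keyK {b : ℝ → ℝ} {M : ℝ} (hb : ∀ t : ℝ, |b t| ≤ M) {c₀ m : ℝ}
    (h : ∀ ε > 0, ∃ᶠ x in 𝓝[Set.Ioi 0] m, c₀ - ε < b x) :
    c₀ ≤ bstarEnv b m := by
  by_cases hbm : c₀ ≤ b m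
  · exact hbm.trans (le_max_left _ _)
  push_neg at hbm
  have hF : ∀ ε > 0, ∃ᶠ x in 𝓝[({m}ᶜ ∩ Set.Ioi 0)] m, c₀ - ε ≤ b x := by
    intro ε hε
    rw [Filter.frequently_iff]
    intro W hW
    rw [mem_nhdsWithin] at hW
    obtain ⟨V, hVo, hmV, hVW⟩ := hW
    have hε' : 0 < min ε (c₀ - b m) := lt_min hε (by linarith)
    have hVmem : V ∩ Set.Ioi 0 ∈ 𝓝[Set.Ioi 0] m :=
      inter_mem (mem_nhdsWithin_of_mem_nhds (hVo.mem_nhds hmV)) self_mem_nhdsWithin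
    obtain ⟨x, ⟨hxV, hx0⟩, hxb⟩ := Filter.frequently_iff.mp (h _ hε') hVmem
    have hxm : x ≠ m := by
      intro e
      rw [e] at hxb
      have := min_le_right ε (c₀ - b m)
      linarith
    refine ⟨x, hVW ⟨hxV, hxm, hx0⟩, ?_⟩
    have := min_le_left ε (c₀ - b m)
    linarith
  have hle : c₀ ≤ limsup b (𝓝[({m}ᶜ ∩ Set.Ioi 0)] m) :=
    le_of_forall_sub_le fun ε hε => le_limsup_of_frequently_le (hF ε hε) (bstar_bddUnder hb _)
  exact hle.trans (le_max_right _ _)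

private lemma sInf_mem_landmarkSet {b : ℝ → ℝ} {M : ℝ} (hb : ∀ t : ℝ, |b t| ≤ M)
    {a c : ℝ} (ha : 0 < a) (hac : a < c) :
    sInf {u ∈ Set.Icc a c | sSup (b '' Set.Icc a c) ≤ bstarEnv b u}
      ∈ {u ∈ Set.Icc a c | sSup (b '' Set.Icc a c) ≤ bstarEnv b u} := by
  set c₀ := sSup (b '' Set.Icc a c) with hc₀
  set S := {u ∈ Set.Icc a c | c₀ ≤ bstarEnv b u} with hS
  have hne : (b '' Set.Icc a c).Nonempty := ⟨b a, mem_image_of_mem b ⟨le_refl a, hac.le⟩⟩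
  have huEx : ∀ k : ℕ, ∃ v ∈ Set.Icc a c, c₀ - 1 / ((k : ℝ) + 1) < b v := by
    intro k
    have hlt : c₀ - 1 / ((k : ℝ) + 1) < c₀ := by
      have : (0:ℝ) < 1 / ((k : ℝ) + 1) := by positivity
      linarith
    obtain ⟨y, hy, hy2⟩ := exists_lt_of_lt_csSup hne hlt
    obtain ⟨v, hv1, rfl⟩ := hy
    exact ⟨v, hv1, hy2⟩
  choose u hu1 hu2 using huEx
  obtain ⟨x, hx, φ, hφ, hconv⟩ := (isCompact_Icc).tendsto_subseq hu1
  have hxS : x ∈ S := by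
    refine ⟨hx, keyK hb ?_⟩
    intro ε hε
    rw [Filter.frequently_iff]
    intro W hW
    rw [mem_nhdsWithin] at hW
    obtain ⟨V, hVo, hxV, hVW⟩ := hW
    obtain ⟨N, hN⟩ := exists_nat_one_div_lt hε
    have hev : ∀ᶠ k in atTop, u (φ k) ∈ V := hconv (hVo.mem_nhds hxV)
    obtain ⟨k, hkV, hkN⟩ := (hev.and (eventually_ge_atTop N)).exists
    refine ⟨u (φ k), hVW ⟨hkV, lt_of_lt_of_le ha (hu1 (φ k)).1⟩, ?_⟩
    have hNk : (N : ℝ) ≤ (φ k : ℝ) := by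
      exact_mod_cast hkN.trans hφ.le_apply
    have h1 : 1 / ((φ k : ℝ) + 1) ≤ 1 / ((N : ℝ) + 1) :=
      one_div_le_one_div_of_le (by positivity) (by linarith)
    have := hu2 (φ k)
    linarith
  have hSne : S.Nonempty := ⟨x, hxS⟩
  have hSbdd : BddBelow S := ⟨a, fun y hy => hy.1.1⟩
  by_cases hms : sInf S ∈ S
  · exact hms
  set m := sInf S with hm
  have hma : a ≤ m := le_csInf hSne fun y hy => hy.1.1
  have hmc : m ≤ c := (csInf_le hSbdd hxS).trans hx.2
  refine ⟨⟨hma, hmc⟩, keyK hb ?_⟩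
  intro ε hε
  rw [Filter.frequently_iff]
  intro W hW
  rw [mem_nhdsWithin] at hW
  obtain ⟨V, hVo, hmV, hVW⟩ := hW
  obtain ⟨δ, hδ, hball⟩ := Metric.isOpen_iff.mp hVo m hmV
  obtain ⟨s', hs'S, hs'lt⟩ := (csInf_lt_iff hSbdd hSne).mp
    (show sInf S < m + δ by rw [← hm]; linarith)
  have hms' : m ≤ s' := csInf_le hSbdd hs'S
  have hs'pos : 0 < s' := lt_of_lt_of_le ha hs'S.1.1
  have hs'ball : s' ∈ Metric.ball m δ := by
    rw [Metric.mem_ball, Real.dist_eq, abs_lt]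
    constructor <;> linarith
  by_cases hcb : c₀ ≤ b s'
  · exact ⟨s', hVW ⟨hball hs'ball, hs'pos⟩, by linarith⟩
  · push_neg at hcb
    have hls : c₀ ≤ limsup b (𝓝[({s'}ᶜ ∩ Set.Ioi 0)] s') := by
      have h2 := hs'S.2
      rw [bstarEnv] at h2
      exact (le_max_iff.mp h2).resolve_left (not_le.mpr hcb)
    have hnb : (𝓝[({s'}ᶜ ∩ Set.Ioi 0)] s').NeBot := by
      have h1 : (𝓝[Set.Ioo 0 s'] s').NeBot := right_nhdsWithin_Ioo_neBot hs'pos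
      exact h1.mono (nhdsWithin_mono _ fun y hy => ⟨ne_of_lt hy.2, hy.1⟩)
    have hcob : IsCoboundedUnder (· ≤ ·) (𝓝[({s'}ᶜ ∩ Set.Ioi 0)] s') b :=
      IsBoundedUnder.isCoboundedUnder_le
        (isBoundedUnder_of ⟨-M, fun x => (abs_le.mp (hb x)).1⟩)
    have hfreq : ∃ᶠ y in 𝓝[({s'}ᶜ ∩ Set.Ioi 0)] s', c₀ - ε < b y :=
      frequently_lt_of_lt_limsup hcob (lt_of_lt_of_le (by linarith) hls)
    have hev1 : ∀ᶠ y in 𝓝[({s'}ᶜ ∩ Set.Ioi 0)] s', y ∈ Metric.ball m δ :=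
      Filter.eventually_iff.mpr (nhdsWithin_le_nhds (Metric.isOpen_ball.mem_nhds hs'ball))
    have hev2 : ∀ᶠ y in 𝓝[({s'}ᶜ ∩ Set.Ioi 0)] s', y ∈ Set.Ioi (0:ℝ) :=
      eventually_nhdsWithin_of_forall fun y hy => hy.2
    obtain ⟨y, hyb, hyball, hy0⟩ := (hfreq.and_eventually (hev1.and hev2)).exists
    exact ⟨y, hVW ⟨hball hyball, hy0⟩, hyb⟩

/-- for a process `X` with continuous sample paths and bounded `b`,
the event `{X_s ≥ b(s) ∀ s ∈ (0,t)}` equals the event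
`{X_s ≥ b*(s) ∀ s ∈ (0,t) ∩ LM(b)}`, where `LM(b) = {t_n^i : n, i ∈ ℕ}`. -/
theorem stmt5 {Ω : Type*} (X : ℝ → Ω → ℝ)
    (hX : ∀ ω : Ω, Continuous fun s : ℝ => X s ω)
    (b : ℝ → ℝ) (M : ℝ) (hb : ∀ t : ℝ, |b t| ≤ M)
    (t : ℝ) (ht : 0 < t) :
    {ω : Ω | ∀ s ∈ Set.Ioo (0 : ℝ) t, b s ≤ X s ω}
      = {ω : Ω | ∀ s ∈ Set.Ioo (0 : ℝ) t,
          (∃ n i : ℕ, s = landmark b n i) → bstarEnv b s ≤ X s ω} := by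
  ext ω
  simp only [mem_setOf_eq]
  constructor
  · intro h s hs _
    rw [bstarEnv]
    refine max_le (h s hs) ?_
    have hnb : (𝓝[({s}ᶜ ∩ Set.Ioi 0)] s).NeBot := by
      have h1 : (𝓝[Set.Ioo 0 s] s).NeBot := right_nhdsWithin_Ioo_neBot hs.1
      exact h1.mono (nhdsWithin_mono _ fun y hy => ⟨ne_of_lt hy.2, hy.1⟩)
    have hev : ∀ᶠ x in 𝓝[({s}ᶜ ∩ Set.Ioi 0)] s, b x ≤ X x ω := by
      have hmem : ∀ᶠ x in 𝓝[({s}ᶜ ∩ Set.Ioi 0)] s, x ∈ Set.Ioo (0:ℝ) t :=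
        Filter.eventually_iff.mpr (nhdsWithin_le_nhds (isOpen_Ioo.mem_nhds hs))
      exact hmem.mono fun x hx => h x hx
    have htd : Tendsto (fun x => X x ω) (𝓝[({s}ᶜ ∩ Set.Ioi 0)] s) (𝓝 (X s ω)) :=
      ((hX ω).tendsto s).mono_left nhdsWithin_le_nhds
    calc limsup b (𝓝[({s}ᶜ ∩ Set.Ioi 0)] s)
        ≤ limsup (fun x => X x ω) (𝓝[({s}ᶜ ∩ Set.Ioi 0)] s) :=
          limsup_le_limsup hev
            (IsBoundedUnder.isCoboundedUnder_le
              (isBoundedUnder_of ⟨-M, fun x => (abs_le.mp (hb x)).1⟩))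
            htd.isBoundedUnder_le
      _ = X s ω := htd.limsup_eq
  · intro h s hs
    refine le_of_forall_pos_le_add fun ε hε => ?_
    obtain ⟨δ, hδ, hδ2⟩ := Metric.continuous_iff.mp (hX ω) s ε hε
    obtain ⟨n, hn⟩ := exists_pow_lt_of_lt_one
      (show (0:ℝ) < min δ (min s (t - s)) by
        refine lt_min hδ (lt_min hs.1 (by linarith [hs.2])))
      (show (1:ℝ)/2 < 1 by norm_num)
    rw [one_div_pow] at hn
    have h2n : (0:ℝ) < 2 ^ n := by positivity
    have hnδ : 1 / (2:ℝ) ^ n < δ := lt_of_lt_of_le hn (min_le_left _ _)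
    have hns : 1 / (2:ℝ) ^ n < s := lt_of_lt_of_le hn ((min_le_right _ _).trans (min_le_left _ _))
    have hnt : 1 / (2:ℝ) ^ n < t - s :=
      lt_of_lt_of_le hn ((min_le_right _ _).trans (min_le_right _ _))
    set i := ⌊(2:ℝ) ^ n * s⌋₊ with hi
    have hfl : (i:ℝ) ≤ 2 ^ n * s := Nat.floor_le (le_of_lt (mul_pos h2n hs.1))
    have hfl2 : 2 ^ n * s < (i:ℝ) + 1 := Nat.lt_floor_add_one _
    have hfl3 : 2 ^ n * s - 1 < (i:ℝ) := Nat.sub_one_lt_floor _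
    have ha' : (i:ℝ) / 2 ^ n ≤ s := by rw [div_le_iff₀ h2n]; linarith
    have hc' : s < ((i:ℝ) + 1) / 2 ^ n := by rw [lt_div_iff₀ h2n]; linarith
    have halow : s - 1 / 2 ^ n < (i:ℝ) / 2 ^ n := by
      rw [lt_div_iff₀ h2n]
      have : (s - 1 / 2 ^ n) * 2 ^ n = 2 ^ n * s - 1 := by field_simp
      linarith [hfl3]
    have hchigh : ((i:ℝ) + 1) / 2 ^ n ≤ s + 1 / 2 ^ n := by
      rw [div_le_iff₀ h2n]
      have : (s + 1 / 2 ^ n) * 2 ^ n = 2 ^ n * s + 1 := by field_simp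
      linarith
    have ha'pos : 0 < (i:ℝ) / 2 ^ n := by linarith
    have hac' : (i:ℝ) / 2 ^ n < ((i:ℝ) + 1) / 2 ^ n := by
      rw [div_lt_div_iff₀ h2n h2n]
      nlinarith
    have hmem := sInf_mem_landmarkSet hb ha'pos hac'
    rw [← landmark] at hmem
    obtain ⟨hτIcc, hτb⟩ := hmem
    set τ := landmark b n i with hτ
    have hτIoo : τ ∈ Set.Ioo (0:ℝ) t :=
      ⟨lt_of_lt_of_le ha'pos hτIcc.1, lt_of_le_of_lt hτIcc.2 (by linarith)⟩
    have hXτ : bstarEnv b τ ≤ X τ ω := h τ hτIoo ⟨n, i, rfl⟩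
    have hbc : b s ≤ sSup (b '' Set.Icc ((i:ℝ) / 2 ^ n) (((i:ℝ) + 1) / 2 ^ n)) :=
      le_csSup ⟨M, by rintro _ ⟨x, -, rfl⟩; exact (abs_le.mp (hb x)).2⟩
        (mem_image_of_mem b ⟨ha', hc'.le⟩)
    have hdist : dist τ s < δ := by
      rw [Real.dist_eq, abs_lt]
      constructor
      · linarith [hτIcc.1]
      · linarith [hτIcc.2]
    have hXd := hδ2 τ hdist
    rw [Real.dist_eq, abs_lt] at hXd
    linarith
end

section
/- Let X have continuous sample paths, b : (0,∞) → ℝ be any function, b*(t) = max(b(t), limsup_{s→t} b(s)), b*_-(t) = limsup_{s↗t} b(s), τ = inf{s>0 : X_s < b(s)}, τ̂ = inf{s>0 : X_s ≤ b(s)}. Then for all t > 0: {ω : τ(ω) = t or τ̂(ω) = t} ⊆ {ω : b*_-(t) ≤ X_t(ω) ≤ b*(t)}. -/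
open Filter Set Topology

/-- with `τ = inf{s>0 : X_s < b s}` and `τ̂ = inf{s>0 : X_s ≤ b s}`
(infima in the extended reals), for every `t > 0`,
`{τ = t or τ̂ = t} ⊆ {b*_-(t) ≤ X_t ≤ b*(t)}`, where
`b*(t) = max (b t) (limsup_{s→t} b s)` and `b*_-(t) = limsup_{s↗t} b s`. -/
theorem stmt8 {Ω : Type*} (X : ℝ → Ω → ℝ)
    (hcont : ∀ ω : Ω, Continuous fun s : ℝ => X s ω)
    (b : ℝ → ℝ) (t : ℝ) (ht : 0 < t) (ω : Ω)
    (h : sInf ((fun s : ℝ => (s : EReal)) '' {s : ℝ | 0 < s ∧ X s ω < b s}) = (t : EReal)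
      ∨ sInf ((fun s : ℝ => (s : EReal)) '' {s : ℝ | 0 < s ∧ X s ω ≤ b s}) = (t : EReal)) :
    Filter.limsup (fun s : ℝ => (b s : EReal))
        (nhdsWithin t (Set.Iio t ∩ Set.Ioi 0)) ≤ (X t ω : EReal)
    ∧ (X t ω : EReal) ≤ max (b t : EReal)
        (Filter.limsup (fun s : ℝ => (b s : EReal))
          (nhdsWithin t ({t}ᶜ ∩ Set.Ioi 0))) := by
  have hX : Continuous fun s : ℝ => ((X s ω : EReal)) :=
    continuous_coe_real_ereal.comp (hcont ω)
  obtain ⟨P, hP1, hP2, hInf⟩ :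
      ∃ P : ℝ → Prop, (∀ s, P s → X s ω ≤ b s) ∧ (∀ s, ¬ P s → b s ≤ X s ω) ∧
        sInf ((fun s : ℝ => (s : EReal)) '' {s | 0 < s ∧ P s}) = (t : EReal) := by
    rcases h with h | h
    · exact ⟨fun s => X s ω < b s, fun s hs => hs.le, fun s hs => le_of_not_gt hs, h⟩
    · exact ⟨fun s => X s ω ≤ b s, fun s hs => hs, fun s hs => (lt_of_not_ge hs).le, h⟩
  have hlb : ∀ s, 0 < s → P s → t ≤ s := by
    intro s hs hPs
    have : (t : EReal) ≤ (s : EReal) := hInf ▸ sInf_le ⟨s, ⟨hs, hPs⟩, rfl⟩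
    exact_mod_cast this
  have hex : ∀ ε > (0 : ℝ), ∃ s, 0 < s ∧ P s ∧ s < t + ε := by
    intro ε hε
    by_contra hno
    push_neg at hno
    have hls : ((t + ε : ℝ) : EReal) ≤
        sInf ((fun s : ℝ => (s : EReal)) '' {s | 0 < s ∧ P s}) := by
      refine le_sInf ?_
      rintro x ⟨s, ⟨hs0, hPs⟩, rfl⟩
      show ((t + ε : ℝ) : EReal) ≤ (s : EReal)
      exact_mod_cast hno s hs0 hPs
    rw [hInf] at hls
    have : t + ε ≤ t := by exact_mod_cast hls
    linarith
  constructor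
  · -- first inequality
    have hset : Iio t ∩ Ioi (0 : ℝ) = Ioo 0 t := by
      ext x; simp [and_comm]
    haveI hnb : (𝓝[Iio t ∩ Ioi (0 : ℝ)] t).NeBot := by
      rw [hset, ← mem_closure_iff_nhdsWithin_neBot, closure_Ioo ht.ne]
      exact ⟨ht.le, le_refl t⟩
    have heb : ∀ᶠ s in 𝓝[Iio t ∩ Ioi (0 : ℝ)] t, (b s : EReal) ≤ (X s ω : EReal) := by
      filter_upwards [self_mem_nhdsWithin] with s hs
      rcases hs with ⟨hlt, hpos⟩
      by_cases hps : P s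
      · exact absurd (hlb s hpos hps) (not_le.2 hlt)
      · exact_mod_cast hP2 s hps
    have hten : Tendsto (fun s : ℝ => (X s ω : EReal)) (𝓝[Iio t ∩ Ioi (0 : ℝ)] t)
        (𝓝 (X t ω : EReal)) := (hX.tendsto t).mono_left nhdsWithin_le_nhds
    calc limsup (fun s : ℝ => (b s : EReal)) (𝓝[Iio t ∩ Ioi (0 : ℝ)] t)
        ≤ limsup (fun s : ℝ => (X s ω : EReal)) (𝓝[Iio t ∩ Ioi (0 : ℝ)] t) :=
          limsup_le_limsup heb
      _ = (X t ω : EReal) := hten.limsup_eq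
  · -- second inequality
    by_cases hbt : X t ω ≤ b t
    · exact le_trans (EReal.coe_le_coe_iff.2 hbt) (le_max_left _ _)
    · have hPt : ¬ P t := fun hp => hbt (hP1 t hp)
      set l₂ := 𝓝[{t}ᶜ ∩ Ioi (0 : ℝ)] t with hl₂
      set l₃ := l₂ ⊓ 𝓟 {s | P s} with hl₃
      haveI hnb3 : l₃.NeBot := by
        rw [hl₃, inf_principal_neBot_iff]
        intro U hU
        rw [hl₂, mem_nhdsWithin] at hU
        obtain ⟨V, hVopen, htV, hVsub⟩ := hU
        obtain ⟨ε, hε, hball⟩ := Metric.isOpen_iff.1 hVopen t htV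
        obtain ⟨s, hs0, hPs, hslt⟩ := hex ε hε
        have hst : t ≤ s := hlb s hs0 hPs
        have hsne : s ≠ t := fun hh => hPt (hh ▸ hPs)
        refine ⟨s, hVsub ⟨hball ?_, hsne, hs0⟩, hPs⟩
        rw [Metric.mem_ball, Real.dist_eq, abs_sub_lt_iff]
        constructor <;> linarith
      have evP : ∀ᶠ s in l₃, P s := by
        rw [hl₃, eventually_inf_principal]
        exact Eventually.of_forall fun s hs => hs
      have hten : Tendsto (fun s : ℝ => (X s ω : EReal)) l₃ (𝓝 (X t ω : EReal)) :=
        (hX.tendsto t).mono_left (le_trans inf_le_left nhdsWithin_le_nhds)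
      calc (X t ω : EReal) = liminf (fun s : ℝ => (X s ω : EReal)) l₃ := hten.liminf_eq.symm
        _ ≤ liminf (fun s : ℝ => (b s : EReal)) l₃ :=
            liminf_le_liminf (evP.mono fun s hs => EReal.coe_le_coe_iff.2 (hP1 s hs))
        _ ≤ limsup (fun s : ℝ => (b s : EReal)) l₃ := liminf_le_limsup
        _ ≤ limsup (fun s : ℝ => (b s : EReal)) l₂ := limsup_le_limsup_of_le inf_le_left
        _ ≤ max (b t : EReal) _ := le_max_right _ _
end

section
/- Let X have continuous paths and let b, b₁, b₂, … : (0,∞) → [-∞,∞) be upper-semi-continuous functions with b₁ ≤ b₂ ≤ b₃ ≤ ⋯ and b(t) = lim_{n→∞} b_n(t) for all t > 0. Let τ = inf{s>0 : X_s < b(s)}, τ_n = inf{s>0 : X_s < b_n(s)}, p(t) = P(τ ≥ t), p_n(t) = P(τ_n ≥ t). Then for every t ≥ 0, p(t) = lim_{n→∞} p_n(t). -/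
open MeasureTheory Set Filter Topology

/-- for upper-semi-continuous boundaries `b_n ↑ b` pointwise, the
survival probabilities converge: `p(t) = lim_n p_n(t)` for every `t ≥ 0`, where
`p(t) = P(X_s ≥ b(s) ∀ s ∈ (0,t))` and similarly for `p_n`. -/
theorem stmt12 {Ω : Type*} [MeasurableSpace Ω] (μ : Measure Ω)
    [IsProbabilityMeasure μ] (X : ℝ → Ω → ℝ)
    (hcont : ∀ ω : Ω, Continuous fun s : ℝ => X s ω)
    (b : ℝ → EReal) (bn : ℕ → ℝ → EReal)
    (husc : ∀ t : ℝ, 0 < t →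
      Filter.limsup b (nhdsWithin t ({t}ᶜ ∩ Set.Ioi 0)) ≤ b t)
    (huscn : ∀ (n : ℕ) (t : ℝ), 0 < t →
      Filter.limsup (bn n) (nhdsWithin t ({t}ᶜ ∩ Set.Ioi 0)) ≤ bn n t)
    (hmono : ∀ (n : ℕ) (t : ℝ), 0 < t → bn n t ≤ bn (n + 1) t)
    (hlim : ∀ t : ℝ, 0 < t →
      Filter.Tendsto (fun n => bn n t) Filter.atTop (nhds (b t)))
    (hmeasn : ∀ (n : ℕ) (t : ℝ),
      MeasurableSet {ω : Ω | ∀ s ∈ Set.Ioo (0 : ℝ) t, bn n s ≤ (X s ω : EReal)})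
    (hmeas : ∀ t : ℝ,
      MeasurableSet {ω : Ω | ∀ s ∈ Set.Ioo (0 : ℝ) t, b s ≤ (X s ω : EReal)}) :
    ∀ t : ℝ, 0 ≤ t →
      Filter.Tendsto
        (fun n => μ {ω : Ω | ∀ s ∈ Set.Ioo (0 : ℝ) t, bn n s ≤ (X s ω : EReal)})
        Filter.atTop
        (nhds (μ {ω : Ω | ∀ s ∈ Set.Ioo (0 : ℝ) t, b s ≤ (X s ω : EReal)})) := by
  intro t ht
  set A : ℕ → Set Ω := fun n => {ω : Ω | ∀ s ∈ Set.Ioo (0 : ℝ) t, bn n s ≤ (X s ω : EReal)}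
  have hmonoS : ∀ s : ℝ, 0 < s → Monotone fun n => bn n s := fun s hs =>
    monotone_nat_of_le_succ fun n => hmono n s hs
  have hAnti : Antitone A := by
    intro n m hnm ω hω s hs
    exact le_trans (hmonoS s hs.1 hnm) (hω s hs)
  have hInter : ⋂ n, A n = {ω : Ω | ∀ s ∈ Set.Ioo (0 : ℝ) t, b s ≤ (X s ω : EReal)} := by
    ext ω
    simp only [Set.mem_iInter, Set.mem_setOf_eq, A]
    constructor
    · intro h s hs
      exact le_of_tendsto (hlim s hs.1) (Filter.Eventually.of_forall fun n => h n s hs)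
    · intro h n s hs
      exact le_trans ((hmonoS s hs.1).ge_of_tendsto (hlim s hs.1) n) (h s hs)
  rw [← hInter]
  exact tendsto_measure_iInter_atTop (fun n => (hmeasn n t).nullMeasurableSet) hAnti
    ⟨0, measure_ne_top μ _⟩
end

section
/- Let X have continuous paths and b be a boundary such that the survival probability p(t) = P(X_s ≥ b(s) ∀ s ∈ (0,t)) is continuous on [0,∞), and w(x,t) = P(τ ≥ t, X_t > x) with τ = inf{s>0 : X_s < b(s)}. Then for any x ∈ ℝ and t > s > 0: |w(x,t) − w(x,s)| ≤ P(X_s > x ≥ X_t) + P(X_t > x ≥ X_s) + |p(s) − p(t)|. Consequently, if additionally t ↦ X_t is stochastically continuous, then w(x,·) is continuous on (0,∞). -/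
open MeasureTheory Set Filter Topology

lemma toReal2 {Ω : Type*} [MeasurableSpace Ω] (μ : Measure Ω) [IsProbabilityMeasure μ]
    {A B C : Set Ω} (h : A ⊆ B ∪ C) :
    (μ A).toReal ≤ (μ B).toReal + (μ C).toReal := by
  rw [← ENNReal.toReal_add (measure_ne_top μ B) (measure_ne_top μ C)]
  exact ENNReal.toReal_mono (by finiteness)
    ((measure_mono h).trans (measure_union_le _ _))

lemma toReal3 {Ω : Type*} [MeasurableSpace Ω] (μ : Measure Ω) [IsProbabilityMeasure μ]
    {A B C D : Set Ω} (h : A ⊆ B ∪ C ∪ D) :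
    (μ A).toReal ≤ (μ B).toReal + (μ C).toReal + (μ D).toReal := by
  have h1 := toReal2 μ h
  have h2 := toReal2 μ (le_refl (B ∪ C))
  linarith

/-- with `w(x,t) = P(X_s ≥ b(s) ∀ s ∈ (0,t), X_t > x)` and
`p(t) = P(X_s ≥ b(s) ∀ s ∈ (0,t))` continuous on `[0,∞)`, for `t > s > 0`:
`|w(x,t) − w(x,s)| ≤ P(X_s > x ≥ X_t) + P(X_t > x ≥ X_s) + |p(s) − p(t)|`.
Consequently, if `X` is stochastically continuous (and `P(X_t = x) = 0`),
then `w(x,·)` is continuous on `(0,∞)`. -/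
theorem stmt16 {Ω : Type*} [MeasurableSpace Ω] (μ : Measure Ω)
    [IsProbabilityMeasure μ] (X : ℝ → Ω → ℝ)
    (hcont : ∀ ω : Ω, Continuous fun s : ℝ => X s ω)
    (hX : ∀ t : ℝ, Measurable (X t))
    (b : ℝ → ℝ) (x : ℝ) (w : ℝ → ℝ → ℝ) (p : ℝ → ℝ)
    (hw : ∀ y t : ℝ, w y t
      = (μ {ω : Ω | (∀ s ∈ Set.Ioo (0 : ℝ) t, b s ≤ X s ω) ∧ y < X t ω}).toReal)
    (hp : ∀ t : ℝ, p t = (μ {ω : Ω | ∀ s ∈ Set.Ioo (0 : ℝ) t, b s ≤ X s ω}).toReal)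
    (hmeas : ∀ t : ℝ, MeasurableSet {ω : Ω | ∀ s ∈ Set.Ioo (0 : ℝ) t, b s ≤ X s ω})
    (hpcont : ContinuousOn p (Set.Ici 0)) :
    (∀ s t : ℝ, 0 < s → s < t →
      |w x t - w x s| ≤ (μ {ω : Ω | x < X s ω ∧ X t ω ≤ x}).toReal
        + (μ {ω : Ω | x < X t ω ∧ X s ω ≤ x}).toReal + |p s - p t|)
    ∧ ((∀ t : ℝ, 0 < t → ∀ ε : ℝ, 0 < ε →
          Filter.Tendsto (fun s : ℝ => μ {ω : Ω | ε ≤ |X s ω - X t ω|})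
            (nhds t) (nhds 0)) →
        (∀ t : ℝ, 0 < t → μ {ω : Ω | X t ω = x} = 0) →
        ContinuousOn (fun t => w x t) (Set.Ioi 0)) := by
  have key : ∀ s t : ℝ, 0 < s → s < t →
      |w x t - w x s| ≤ (μ {ω : Ω | x < X s ω ∧ X t ω ≤ x}).toReal
        + (μ {ω : Ω | x < X t ω ∧ X s ω ≤ x}).toReal + |p s - p t| := by
    intro s t hs hst
    have hAB : {ω : Ω | ∀ r ∈ Set.Ioo (0:ℝ) t, b r ≤ X r ω}
        ⊆ {ω : Ω | ∀ r ∈ Set.Ioo (0:ℝ) s, b r ≤ X r ω} :=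
      fun ω h r hr => h r ⟨hr.1, hr.2.trans hst⟩
    have h1 : (μ {ω : Ω | (∀ r ∈ Set.Ioo (0:ℝ) t, b r ≤ X r ω) ∧ x < X t ω}).toReal
        ≤ (μ {ω : Ω | (∀ r ∈ Set.Ioo (0:ℝ) s, b r ≤ X r ω) ∧ x < X s ω}).toReal
          + (μ {ω : Ω | x < X t ω ∧ X s ω ≤ x}).toReal := by
      refine toReal2 μ fun ω hω => ?_
      by_cases hS : x < X s ω
      · exact Or.inl ⟨fun r hr => hω.1 r ⟨hr.1, hr.2.trans hst⟩, hS⟩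
      · exact Or.inr ⟨hω.2, not_lt.1 hS⟩
    have h2 : (μ {ω : Ω | (∀ r ∈ Set.Ioo (0:ℝ) s, b r ≤ X r ω) ∧ x < X s ω}).toReal
        ≤ (μ {ω : Ω | (∀ r ∈ Set.Ioo (0:ℝ) t, b r ≤ X r ω) ∧ x < X t ω}).toReal
          + (μ {ω : Ω | x < X s ω ∧ X t ω ≤ x}).toReal
          + (μ ({ω : Ω | ∀ r ∈ Set.Ioo (0:ℝ) s, b r ≤ X r ω}
              \ {ω : Ω | ∀ r ∈ Set.Ioo (0:ℝ) t, b r ≤ X r ω})).toReal := by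
      refine toReal3 μ fun ω hω => ?_
      by_cases hA : ∀ r ∈ Set.Ioo (0:ℝ) t, b r ≤ X r ω
      · by_cases hT : x < X t ω
        · exact Or.inl (Or.inl ⟨hA, hT⟩)
        · exact Or.inl (Or.inr ⟨hω.2, not_lt.1 hT⟩)
      · exact Or.inr ⟨hω.1, hA⟩
    have h3 : (μ ({ω : Ω | ∀ r ∈ Set.Ioo (0:ℝ) s, b r ≤ X r ω}
        \ {ω : Ω | ∀ r ∈ Set.Ioo (0:ℝ) t, b r ≤ X r ω})).toReal ≤ |p s - p t| := by
      rw [measure_diff hAB (hmeas t).nullMeasurableSet (measure_ne_top μ _),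
        ENNReal.toReal_sub_of_le (measure_mono hAB) (measure_ne_top μ _),
        ← hp, ← hp]
      exact le_abs_self _
    rw [hw, hw]
    have n1 : (0:ℝ) ≤ (μ {ω : Ω | x < X s ω ∧ X t ω ≤ x}).toReal := ENNReal.toReal_nonneg
    have n2 : (0:ℝ) ≤ (μ {ω : Ω | x < X t ω ∧ X s ω ≤ x}).toReal := ENNReal.toReal_nonneg
    have n3 : (0:ℝ) ≤ |p s - p t| := abs_nonneg _
    rw [abs_sub_le_iff]
    constructor <;> linarith
  refine ⟨key, fun hSC hzero => ?_⟩
  intro t ht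
  have ht' : (0:ℝ) < t := ht
  refine ContinuousAt.continuousWithinAt ?_
  rw [ContinuousAt, Metric.tendsto_nhds]
  intro δ hδ
  -- choose ε
  have hInter1 : (⋂ n : ℕ, {ω : Ω | x - 1/(n+1) < X t ω ∧ X t ω ≤ x}) = {ω : Ω | X t ω = x} := by
    ext ω
    simp only [Set.mem_iInter, Set.mem_setOf_eq]
    constructor
    · intro h
      refine le_antisymm (h 0).2 ?_
      by_contra hlt
      push_neg at hlt
      obtain ⟨n, hn⟩ := exists_nat_one_div_lt (show (0:ℝ) < x - X t ω by linarith)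
      have := (h n).1
      linarith
    · intro h n
      have : (0:ℝ) < 1/(n+1) := by positivity
      constructor <;> [linarith; linarith]
  have hInter2 : (⋂ n : ℕ, {ω : Ω | x < X t ω ∧ X t ω < x + 1/(n+1)}) = (∅ : Set Ω) := by
    ext ω
    simp only [Set.mem_iInter, Set.mem_setOf_eq, Set.mem_empty_iff_false, iff_false]
    intro h
    obtain ⟨n, hn⟩ := exists_nat_one_div_lt (show (0:ℝ) < X t ω - x by linarith [(h 0).1])
    have := (h n).2
    linarith
  have hm1 : ∀ n : ℕ, MeasurableSet {ω : Ω | x - 1/(n+1) < X t ω ∧ X t ω ≤ x} := by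
    intro n
    exact (hX t) measurableSet_Ioc
  have hm2 : ∀ n : ℕ, MeasurableSet {ω : Ω | x < X t ω ∧ X t ω < x + 1/(n+1)} := by
    intro n
    exact (hX t) measurableSet_Ioo
  have hanti1 : Antitone fun n : ℕ => {ω : Ω | x - 1/(n+1) < X t ω ∧ X t ω ≤ x} := by
    intro m n hmn ω hω
    have hc : (m:ℝ) ≤ n := Nat.cast_le.2 hmn
    have h1 : (1:ℝ)/(n+1) ≤ 1/(m+1) :=
      one_div_le_one_div_of_le (by positivity) (by linarith)
    exact ⟨by linarith [hω.1], hω.2⟩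
  have hanti2 : Antitone fun n : ℕ => {ω : Ω | x < X t ω ∧ X t ω < x + 1/(n+1)} := by
    intro m n hmn ω hω
    have hc : (m:ℝ) ≤ n := Nat.cast_le.2 hmn
    have h1 : (1:ℝ)/(n+1) ≤ 1/(m+1) :=
      one_div_le_one_div_of_le (by positivity) (by linarith)
    exact ⟨hω.1, by linarith [hω.2]⟩
  have htd1 : Tendsto (fun n : ℕ => μ {ω : Ω | x - 1/(n+1) < X t ω ∧ X t ω ≤ x}) atTop (𝓝 0) := by
    have := tendsto_measure_iInter_atTop (μ := μ)
      (fun n => (hm1 n).nullMeasurableSet) hanti1 ⟨0, measure_ne_top μ _⟩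
    rwa [hInter1, hzero t ht'] at this
  have htd2 : Tendsto (fun n : ℕ => μ {ω : Ω | x < X t ω ∧ X t ω < x + 1/(n+1)}) atTop (𝓝 0) := by
    have := tendsto_measure_iInter_atTop (μ := μ)
      (fun n => (hm2 n).nullMeasurableSet) hanti2 ⟨0, measure_ne_top μ _⟩
    rwa [hInter2, measure_empty] at this
  have hδ6 : (0 : ENNReal) < ENNReal.ofReal (δ/6) := by
    simp [ENNReal.ofReal_pos]; linarith
  obtain ⟨n, hn1, hn2⟩ :=
    ((htd1.eventually_lt_const hδ6).and (htd2.eventually_lt_const hδ6)).exists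
  set ε : ℝ := 1/(n+1) with hε_def
  have hε : (0:ℝ) < ε := by positivity
  have c1 : (μ {ω : Ω | x - ε < X t ω ∧ X t ω ≤ x}).toReal < δ/6 :=
    ENNReal.toReal_lt_of_lt_ofReal hn1
  have c2 : (μ {ω : Ω | x < X t ω ∧ X t ω < x + ε}).toReal < δ/6 :=
    ENNReal.toReal_lt_of_lt_ofReal hn2
  -- eventualities
  have E1 : ∀ᶠ s in 𝓝 t, (μ {ω : Ω | ε ≤ |X s ω - X t ω|}).toReal < δ/6 := by
    filter_upwards [(hSC t ht' ε hε).eventually_lt_const hδ6] with s hs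
    exact ENNReal.toReal_lt_of_lt_ofReal hs
  have E2 : ∀ᶠ s in 𝓝 t, |p s - p t| < δ/6 := by
    have hpc : ContinuousAt p t := hpcont.continuousAt (Ici_mem_nhds ht')
    have := hpc.tendsto
    rw [Metric.tendsto_nhds] at this
    filter_upwards [this (δ/6) (by linarith)] with s hs
    rwa [Real.dist_eq] at hs
  have E3 : ∀ᶠ s in 𝓝 t, (0:ℝ) < s := eventually_gt_nhds ht'
  filter_upwards [E1, E2, E3] with s h1 h2 h3
  rw [Real.dist_eq]
  -- bounds on the two crossing probabilities
  have B1 : (μ {ω : Ω | x < X s ω ∧ X t ω ≤ x}).toReal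
      ≤ (μ {ω : Ω | ε ≤ |X s ω - X t ω|}).toReal
        + (μ {ω : Ω | x - ε < X t ω ∧ X t ω ≤ x}).toReal := by
    refine toReal2 μ fun ω hω => ?_
    by_cases hd : ε ≤ |X s ω - X t ω|
    · exact Or.inl hd
    · push_neg at hd
      rw [abs_lt] at hd
      exact Or.inr ⟨by linarith [hω.1, hd.2], hω.2⟩
  have B2 : (μ {ω : Ω | x < X t ω ∧ X s ω ≤ x}).toReal
      ≤ (μ {ω : Ω | ε ≤ |X s ω - X t ω|}).toReal
        + (μ {ω : Ω | x < X t ω ∧ X t ω < x + ε}).toReal := by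
    refine toReal2 μ fun ω hω => ?_
    by_cases hd : ε ≤ |X s ω - X t ω|
    · exact Or.inl hd
    · push_neg at hd
      rw [abs_lt] at hd
      exact Or.inr ⟨hω.1, by linarith [hω.2, hd.1]⟩
  rcases lt_trichotomy s t with hlt | heq | hgt
  · have := key s t h3 hlt
    rw [abs_sub_comm]
    linarith
  · subst heq
    simp only [sub_self, abs_zero]
    linarith
  · have := key t s ht' hgt
    rw [abs_sub_comm (p t) (p s)] at this
    linarith
end
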